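/- arXiv:1909.02594 — 2 statements merged into one kernel-verified Lean document; each statement's English description precedes it below -/
import Mathlib

section
/- A torsion-free group that contains an infinite cyclic subgroup of finite index is itself infinite cyclic. -/
/-- Every nontrivial additive subgroup of `ℤ` is isomorphic to `ℤ`. -/
lemma aux_int_subgroup (K : AddSubgroup ℤ) (hK : K ≠ ⊥) : Nonempty (K ≃+ ℤ) := by
  obtain ⟨a, ha⟩ := Int.subgroup_cyclic K
  have ha0 : a ≠ 0 := by
    rintro rfl
    apply hK
    rw [ha]
    simp
  have hmem : ∀ n : ℤ, n * a ∈ K := by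
    intro n
    rw [ha]
    exact AddSubgroup.mem_closure_singleton.2 ⟨n, by simp [zsmul_eq_mul]⟩
  let f : ℤ →+ K :=
    { toFun := fun n => ⟨n * a, hmem n⟩
      map_zero' := by ext; simp
      map_add' := by intro m n; ext; simp [add_mul] }
  have hinj : Function.Injective f := by
    intro m n h
    have : m * a = n * a := congrArg Subtype.val h
    exact mul_right_cancel₀ ha0 this
  have hsurj : Function.Surjective f := by
    rintro ⟨x, hx⟩
    rw [ha] at hx
    obtain ⟨n, hn⟩ := AddSubgroup.mem_closure_singleton.1 hx
    exact ⟨n, by ext; simpa [f, zsmul_eq_mul] using hn⟩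
  exact ⟨(AddEquiv.ofBijective f ⟨hinj, hsurj⟩).symm⟩

/-- A nontrivial group embedding into `Multiplicative ℤ` is isomorphic to it. -/
lemma aux_embed {K : Type*} [Group K] [Nontrivial K] (f : K →* Multiplicative ℤ)
    (hf : Function.Injective f) : Nonempty (K ≃* Multiplicative ℤ) := by
  let f' : Additive K →+ ℤ := MonoidHom.toAdditiveLeft f
  have hf' : Function.Injective f' := by
    rw [MonoidHom.coe_toAdditiveLeft]
    exact Multiplicative.toAdd.injective.comp (hf.comp Additive.toMul.injective)
  let e1 : Additive K ≃+ f'.range := AddMonoidHom.ofInjective hf'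
  have : Nontrivial (Additive K) := ‹Nontrivial K›
  have hrange : f'.range ≠ ⊥ := by
    rw [← AddSubgroup.nontrivial_iff_ne_bot]
    exact e1.symm.toEquiv.nontrivial
  obtain ⟨e2⟩ := aux_int_subgroup f'.range hrange
  exact ⟨AddEquiv.toMultiplicativeRight (e1.trans e2)⟩

/-- A torsion-free group containing an infinite cyclic subgroup of finite index
is itself infinite cyclic. -/
theorem torsionFree_virtually_Z_is_Z {G : Type*} [Group G]
    (htf : ∀ g : G, g ≠ 1 → ¬IsOfFinOrder g)
    (H : Subgroup G) (hH : H.FiniteIndex) (hZ : Nonempty (H ≃* Multiplicative ℤ)) :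
    Nonempty (G ≃* Multiplicative ℤ) := by
  obtain ⟨e⟩ := hZ
  -- torsion-freeness in a convenient form
  have key : ∀ (g : G) (m : ℕ), m ≠ 0 → g ^ m = 1 → g = 1 := by
    intro g m hm h
    by_contra hg
    exact htf g hg (isOfFinOrder_iff_pow_eq_one.2 ⟨m, Nat.pos_of_ne_zero hm, h⟩)
  -- conjugation of a power
  have conjpow : ∀ (u v : G) (m : ℤ), (u * v * u⁻¹) ^ m = u * v ^ m * u⁻¹ := by
    intro u v m
    rw [show u * v * u⁻¹ = (MulAut.conj u) v from rfl, ← map_zpow]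
    rfl
  -- the normal core of H
  set N := H.normalCore with hNdef
  have hNle : N ≤ H := H.normalCore_le
  haveI hNnorm : N.Normal := H.normalCore_normal
  haveI hNfi : N.FiniteIndex := H.finiteIndex_normalCore
  -- N is nontrivial
  have hNbot : N ≠ ⊥ := by
    intro hbot
    have hcard : Nat.card G ≠ 0 := by
      rw [← Subgroup.index_bot, ← hbot]
      exact hNfi.index_ne_zero
    haveI : Finite G := Nat.finite_of_card_ne_zero hcard
    haveI : Finite H := Subtype.finite
    haveI : Finite (Multiplicative ℤ) := Finite.of_equiv H e.toEquiv
    exact not_finite (Multiplicative ℤ)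
  haveI : Nontrivial N := (Subgroup.nontrivial_iff_ne_bot N).2 hNbot
  -- N is isomorphic to Multiplicative ℤ
  obtain ⟨eN⟩ := aux_embed (e.toMonoidHom.comp (Subgroup.inclusion hNle))
    (e.injective.comp (Subgroup.inclusion_injective hNle))
  -- a generator of N
  set a : N := eN.symm (Multiplicative.ofAdd 1) with hadef
  set aG : G := (a : G) with haGdef
  have hgen : ∀ x : N, (x : G) = aG ^ (Multiplicative.toAdd (eN x)) := by
    intro x
    set k : ℤ := Multiplicative.toAdd (eN x) with hkd
    have hx : x = a ^ k := by
      apply eN.injective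
      rw [map_zpow, hadef, MulEquiv.apply_symm_apply, ← ofAdd_zsmul, smul_eq_mul, mul_one, hkd]
      rfl
    calc (x : G) = ((a ^ k : N) : G) := by rw [← hx]
      _ = aG ^ k := by rw [SubgroupClass.coe_zpow, haGdef]
  have hamem : aG ∈ N := a.2
  have haG1 : aG ≠ 1 := by
    intro h
    have h1 : a = 1 := Subtype.ext h
    rw [hadef] at h1
    have := eN.symm.injective (h1.trans (map_one eN.symm).symm)
    simpa using this
  -- zpow injectivity for aG
  have hzinj : ∀ m : ℤ, aG ^ m = 1 → m = 0 := by
    intro m hm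
    by_contra hm0
    have hnat : aG ^ (m.natAbs : ℤ) = 1 := by
      rcases Int.natAbs_eq m with h | h
      · rw [← h, hm]
      · rw [show ((m.natAbs : ℤ)) = -m by omega, zpow_neg, hm, inv_one]
    rw [zpow_natCast] at hnat
    exact haG1 (key aG m.natAbs (by omega) hnat)
  -- every element of G commutes with aG
  have hcen : ∀ g : G, g * aG = aG * g := by
    intro g
    have h1 : g * aG * g⁻¹ ∈ N := hNnorm.conj_mem aG hamem g
    have h2 : g⁻¹ * aG * g ∈ N := by
      have := hNnorm.conj_mem aG hamem g⁻¹
      simpa using this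
    set k : ℤ := Multiplicative.toAdd (eN ⟨g * aG * g⁻¹, h1⟩) with hk
    set j : ℤ := Multiplicative.toAdd (eN ⟨g⁻¹ * aG * g, h2⟩) with hj
    have hk' : g * aG * g⁻¹ = aG ^ k := hgen ⟨g * aG * g⁻¹, h1⟩
    have hj' : g⁻¹ * aG * g = aG ^ j := hgen ⟨g⁻¹ * aG * g, h2⟩
    have h3 := conjpow g⁻¹ aG k
    rw [inv_inv] at h3
    have hcomp : aG = aG ^ (j * k) := by
      have h4 : aG = g⁻¹ * (g * aG * g⁻¹) * g := by group
      rw [hk', ← h3, hj', ← zpow_mul] at h4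
      exact h4
    have hjk : j * k = 1 := by
      have h5 : aG ^ (j * k - 1) = 1 := by
        rw [zpow_sub, ← hcomp, zpow_one, mul_inv_cancel]
      have := hzinj _ h5
      omega
    have hkcases : k = 1 ∨ k = -1 :=
      Int.isUnit_iff.1 (IsUnit.of_mul_eq_one (a := k) j (by rw [mul_comm]; exact hjk))
    rcases hkcases with h | h
    · rw [h, zpow_one] at hk'
      calc g * aG = g * aG * g⁻¹ * g := by group
        _ = aG * g := by rw [hk']
    · -- k = -1 leads to a contradiction
      exfalso
      rw [h] at hk'
      set n : ℕ := N.index with hn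
      have hn0 : n ≠ 0 := hNfi.index_ne_zero
      have hgn : g ^ n ∈ N := N.pow_index_mem g
      have hgn' : g ^ n = aG ^ (Multiplicative.toAdd (eN ⟨g ^ n, hgn⟩)) := hgen ⟨g ^ n, hgn⟩
      set j' : ℤ := Multiplicative.toAdd (eN ⟨g ^ n, hgn⟩) with hj'def
      have hconj : g * (g ^ n) * g⁻¹ = g ^ n := by group
      rw [hgn', ← conjpow g aG j', hk', ← zpow_mul] at hconj
      have h6 : aG ^ (-j') = aG ^ j' := by
        rw [show (-1 : ℤ) * j' = -j' from by ring] at hconj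
        exact hconj
      have hj0 : j' = 0 := by
        have h8 : aG ^ (j' - -j') = 1 := by
          rw [zpow_sub, h6, mul_inv_cancel]
        have := hzinj _ h8
        omega
      rw [hj0, zpow_zero] at hgn'
      have hg1 : g = 1 := key g n hn0 hgn'
      rw [hg1, one_mul, inv_one, mul_one, zpow_neg_one] at hk'
      have h9 : aG * aG = 1 := by
        nth_rewrite 1 [hk']
        exact inv_mul_cancel aG
      have h10 : aG ^ (2 : ℤ) = 1 := by
        rw [show (2 : ℤ) = 1 + 1 from rfl, zpow_add, zpow_one]
        exact h9
      have := hzinj _ h10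
      omega
  -- N is contained in the center
  have hNcen : N ≤ Subgroup.center G := by
    intro x hx
    rw [Subgroup.mem_center_iff]
    intro g
    have hx' : x = aG ^ (Multiplicative.toAdd (eN ⟨x, hx⟩)) := hgen ⟨x, hx⟩
    rw [hx']
    exact (Commute.zpow_right (hcen g) _).eq
  haveI hcfi : (Subgroup.center G).FiniteIndex := Subgroup.finiteIndex_of_le hNcen
  -- the transfer homomorphism G →* center G
  set T : G →* Subgroup.center G := MonoidHom.transferCenterPow G with hT
  set c : ℕ := (Subgroup.center G).index with hc
  have hc0 : c ≠ 0 := hcfi.index_ne_zero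
  set n : ℕ := N.index with hn
  have hn0 : n ≠ 0 := hNfi.index_ne_zero
  -- the power homomorphism center G →* N
  let ψ : Subgroup.center G →* N :=
    { toFun := fun x => ⟨(x : G) ^ n, N.pow_index_mem (x : G)⟩
      map_one' := by ext; simp
      map_mul' := by
        intro x y
        ext
        have hcomm : Commute (x : G) (y : G) :=
          (Subgroup.mem_center_iff.1 x.2 (y : G)).symm
        simpa using hcomm.mul_pow n }
  -- the composite embedding G →* Multiplicative ℤ
  set Φ : G →* Multiplicative ℤ := eN.toMonoidHom.comp (ψ.comp T) with hΦ
  have hΦinj : Function.Injective Φ := by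
    rw [injective_iff_map_eq_one]
    intro g hg
    have h1 : ψ (T g) = 1 := by
      apply eN.injective
      rw [map_one]
      exact hg
    have h2 : ((T g : G)) ^ n = 1 := by
      have := congrArg Subtype.val h1
      simpa [ψ] using this
    have h3 : (g ^ c) ^ n = 1 := by
      rw [← h2, hT, MonoidHom.transferCenterPow_apply]
    rw [← pow_mul] at h3
    exact key g (c * n) (Nat.mul_ne_zero hc0 hn0) h3
  haveI : Nontrivial G := nontrivial_of_ne aG 1 haG1
  exact aux_embed Φ hΦinj
end

section
/- A torsion-free group containing a free subgroup of finite index is itself free (Swan's theorem, rank-one/cyclic case): if G is torsion-free and has a finite index subgroup isomorphic to ℤ, then G is a free group. -/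
open Subgroup
open scoped commutatorElement

private lemma commutator_mul_center_aux {G : Type*} [Group G] (g h z w : G)
    (hz : z ∈ Subgroup.center G) (hw : w ∈ Subgroup.center G) :
    ⁅g * z, h * w⁆ = ⁅g, h⁆ := by
  have hz' : ∀ x : G, x * z = z * x := fun x => Subgroup.mem_center_iff.mp hz x
  have hw' : ∀ x : G, x * w = w * x := fun x => Subgroup.mem_center_iff.mp hw x
  have step1 : ⁅g * z, h * w⁆ = ⁅g, h * w⁆ := by
    rw [commutatorElement_def, commutatorElement_def, mul_inv_rev]
    have e : g * z * (h * w) = g * (h * w) * z := by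
      rw [mul_assoc, ← hz' (h * w), ← mul_assoc]
    rw [e]; group
  have step2 : ⁅g, h * w⁆ = ⁅g, h⁆ := by
    rw [commutatorElement_def, commutatorElement_def, mul_inv_rev]
    have e : g * (h * w) = g * h * w := (mul_assoc _ _ _).symm
    rw [e]
    have e2 : g * h * w * g⁻¹ = g * h * g⁻¹ * w := by
      rw [mul_assoc (g * h), ← hw' g⁻¹, ← mul_assoc]
    rw [e2]; group
  rw [step1, step2]

private lemma finite_commutatorSet_of_finiteIndex_center {G : Type*} [Group G]
    [(Subgroup.center G).FiniteIndex] : Finite (commutatorSet G) := by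
  set Z := Subgroup.center G
  have hsub : commutatorSet G ⊆ Set.range (fun p : (G ⧸ Z) × (G ⧸ Z) =>
      ⁅p.1.out, p.2.out⁆) := by
    rintro x ⟨g, h, rfl⟩
    refine ⟨(QuotientGroup.mk g, QuotientGroup.mk h), ?_⟩
    obtain ⟨z, hz⟩ := QuotientGroup.mk_out_eq_mul Z g
    obtain ⟨w, hw⟩ := QuotientGroup.mk_out_eq_mul Z h
    simp only [hz, hw]
    exact commutator_mul_center_aux g h z w z.2 w.2
  exact (Set.Finite.subset (Set.finite_range _) hsub).to_subtype

private lemma isFreeGroup_of_infinite_cyclic {G : Type*} [Group G] (b : G)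
    (hb : ¬IsOfFinOrder b) (hgen : ∀ g : G, g ∈ Subgroup.zpowers b) : IsFreeGroup G := by
  have hinj : Function.Injective (fun n : ℤ => b ^ n) :=
    injective_zpow_iff_not_isOfFinOrder.mpr hb
  let φ : FreeGroup Unit →* G := FreeGroup.lift (fun _ => b)
  have hφof : φ (FreeGroup.of ()) = b := FreeGroup.lift_apply_of
  have hofn : ∀ x : FreeGroup Unit, ∃ n : ℤ, x = FreeGroup.of () ^ n := fun x =>
    ⟨FreeGroup.freeGroupUnitEquivInt x, (FreeGroup.freeGroupUnitEquivInt.left_inv x).symm⟩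
  have hsurj : Function.Surjective φ := by
    intro g
    obtain ⟨n, hn⟩ := hgen g
    exact ⟨FreeGroup.of () ^ n, by rw [map_zpow, hφof]; exact hn⟩
  have hinj' : Function.Injective φ := by
    intro x y hxy
    obtain ⟨m, rfl⟩ := hofn x
    obtain ⟨n, rfl⟩ := hofn y
    rw [map_zpow, map_zpow, hφof] at hxy
    rw [hinj hxy]
  exact IsFreeGroup.ofMulEquiv (MulEquiv.ofBijective φ ⟨hinj', hsurj⟩)

/-- Swan's theorem (rank-one case): a torsion-free group with a finite index subgroup
isomorphic to `ℤ` is a free group. -/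
theorem torsionFree_virtually_Z_is_free {G : Type*} [Group G]
    (htf : ∀ g : G, g ≠ 1 → ¬IsOfFinOrder g)
    (H : Subgroup G) (hH : H.FiniteIndex) (hZ : Nonempty (H ≃* Multiplicative ℤ)) :
    IsFreeGroup G := by
  obtain ⟨e⟩ := hZ
  haveI : Infinite (Multiplicative ℤ) := inferInstanceAs (Infinite ℤ)
  haveI : Infinite H := (Equiv.infinite_iff e.toEquiv).mpr inferInstance
  haveI : Infinite G := Infinite.of_injective ((↑) : H → G) Subtype.coe_injective
  haveI : IsCyclic H := isCyclic_of_surjective e.symm e.symm.surjective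
  set N := H.normalCore with hNdef
  haveI hNn : N.Normal := H.normalCore_normal
  haveI : N.FiniteIndex := H.finiteIndex_normalCore
  haveI : IsCyclic (N.subgroupOf H) := Subgroup.isCyclic _
  haveI : IsCyclic N :=
    isCyclic_of_surjective (Subgroup.subgroupOfEquivOfLe H.normalCore_le)
      (Subgroup.subgroupOfEquivOfLe H.normalCore_le).surjective
  obtain ⟨⟨a, haN⟩, hgen⟩ := IsCyclic.exists_generator (α := N)
  have hNa : ∀ x ∈ N, ∃ n : ℤ, x = a ^ n := by
    intro x hx
    obtain ⟨n, hn⟩ := hgen ⟨x, hx⟩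
    exact ⟨n, by simpa using congrArg Subtype.val hn.symm⟩
  have ha1 : a ≠ 1 := by
    rintro rfl
    have hNbot : N = ⊥ := by
      ext x
      simp only [Subgroup.mem_bot]
      constructor
      · intro hx
        obtain ⟨n, hn⟩ := hNa x hx
        simpa using hn
      · rintro rfl; exact N.one_mem
    have h0 : N.index = 0 := by
      rw [hNbot, Subgroup.index_bot, Nat.card_eq_zero_of_infinite]
    exact Subgroup.FiniteIndex.index_ne_zero h0
  have haf : ¬IsOfFinOrder a := htf a ha1
  have hzinj : Function.Injective (fun n : ℤ => a ^ n) :=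
    injective_zpow_iff_not_isOfFinOrder.mpr haf
  have key : ∀ g : G, g * a * g⁻¹ = a ∨ g * a * g⁻¹ = a⁻¹ := by
    intro g
    obtain ⟨k, hk⟩ := hNa _ (hNn.conj_mem a haN g)
    obtain ⟨m, hm⟩ := hNa _ (hNn.conj_mem a haN g⁻¹)
    rw [inv_inv] at hm
    have hcalc : a ^ (k * m) = a ^ (1 : ℤ) := by
      rw [zpow_mul, ← hk, conj_zpow, ← hm]
      group
    have hkm : k * m = 1 := hzinj hcalc
    rcases Int.mul_eq_one_iff_eq_one_or_neg_one.mp hkm with ⟨h1, _⟩ | ⟨h1, _⟩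
    · left; rw [hk, h1, zpow_one]
    · right; rw [hk, h1, zpow_neg_one]
  set C := Subgroup.centralizer ({a} : Set G) with hCdef
  have hmemC : ∀ g : G, g ∈ C ↔ g * a = a * g := fun g =>
    Subgroup.mem_centralizer_singleton_iff
  have haC : a ∈ C := (hmemC a).mpr rfl
  have hNC : N ≤ C := by
    intro x hx
    obtain ⟨n, rfl⟩ := hNa x hx
    exact (hmemC _).mpr ((Commute.refl a).zpow_left n).eq
  have hNCcentral : ∀ x ∈ N, ∀ c ∈ C, c * x = x * c := by
    intro x hx c hc
    obtain ⟨n, rfl⟩ := hNa x hx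
    exact (Commute.zpow_right ((hmemC c).mp hc) n).eq
  haveI hfiN : (N.subgroupOf C).FiniteIndex := by
    constructor
    intro h0
    have hdvd : N.relIndex C ∣ N.index := Subgroup.relIndex_dvd_index_of_normal N C
    have : N.index = 0 := zero_dvd_iff.mp (h0 ▸ hdvd)
    exact Subgroup.FiniteIndex.index_ne_zero this
  have hle_center : N.subgroupOf C ≤ Subgroup.center C := by
    rintro ⟨x, hxC⟩ hx
    rw [Subgroup.mem_center_iff]
    rintro ⟨c, hcC⟩
    exact Subtype.ext (hNCcentral x (Subgroup.mem_subgroupOf.mp hx) c hcC)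
  haveI : (Subgroup.center C).FiniteIndex := Subgroup.finiteIndex_of_le hle_center
  haveI : Finite (commutatorSet C) := finite_commutatorSet_of_finiteIndex_center
  haveI : Finite (_root_.commutator C) := inferInstance
  have hCab : ∀ x y : C, x * y = y * x := by
    intro x y
    have hmem : ⁅x, y⁆ ∈ _root_.commutator C :=
      Subgroup.commutator_mem_commutator (Subgroup.mem_top x) (Subgroup.mem_top y)
    have h4 : IsOfFinOrder (⟨⁅x, y⁆, hmem⟩ : _root_.commutator C) := isOfFinOrder_of_finite _
    have h5 : IsOfFinOrder (⁅x, y⁆ : C) := by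
      rw [← orderOf_pos_iff] at h4 ⊢
      rwa [Subgroup.orderOf_mk] at h4
    have h6 : IsOfFinOrder ((⁅x, y⁆ : C) : G) := by
      rw [← orderOf_pos_iff] at h5 ⊢
      rwa [Subgroup.orderOf_coe]
    have h7 : ((⁅x, y⁆ : C) : G) = 1 := by
      by_contra hne
      exact htf _ hne h6
    have h8 : (⁅x, y⁆ : C) = 1 := Subtype.ext h7
    exact commutatorElement_eq_one_iff_mul_comm.mp h8
  set m := (N.subgroupOf C).index with hmdef
  have hm0 : m ≠ 0 := hfiN.index_ne_zero
  haveI : (N.subgroupOf C).Normal := by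
    constructor
    intro n hn g
    have : g * n * g⁻¹ = n := by rw [hCab g n]; group
    rwa [this]
  have hpow : ∀ x : C, (x : G) ^ m ∈ N := by
    intro x
    have h1 := Subgroup.pow_index_mem (N.subgroupOf C) x
    have h2 := Subgroup.mem_subgroupOf.mp h1
    simpa using h2
  let ψ : C →* N :=
    { toFun := fun x => ⟨(x : G) ^ m, hpow x⟩
      map_one' := by ext; simp
      map_mul' := by
        intro x y
        ext
        have hcomm : Commute (x : G) (y : G) := congrArg Subtype.val (hCab x y)
        show ((x * y : C) : G) ^ m = (x : G) ^ m * (y : G) ^ m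
        push_cast
        exact hcomm.mul_pow m }
  have hψinj : Function.Injective ψ := by
    rw [injective_iff_map_eq_one]
    intro x hx
    have h1 : (x : G) ^ m = 1 := congrArg Subtype.val hx
    by_contra hne
    have hxne : (x : G) ≠ 1 := fun h => hne (Subtype.ext h)
    exact htf _ hxne (isOfFinOrder_iff_pow_eq_one.mpr ⟨m, Nat.pos_of_ne_zero hm0, h1⟩)
  haveI : IsCyclic ↥ψ.range := Subgroup.isCyclic _
  haveI : IsCyclic C :=
    isCyclic_of_surjective (MonoidHom.ofInjective hψinj).symm
      (MonoidHom.ofInjective hψinj).symm.surjective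
  obtain ⟨b, hbgen⟩ := IsCyclic.exists_generator (α := C)
  have hb1 : (b : G) ≠ 1 := by
    intro h
    obtain ⟨n, hn⟩ := hbgen ⟨a, haC⟩
    have : (b : G) ^ n = a := by simpa using congrArg Subtype.val hn
    rw [h, one_zpow] at this
    exact ha1 this.symm
  have hbinj : Function.Injective (fun n : ℤ => (b : G) ^ n) :=
    injective_zpow_iff_not_isOfFinOrder.mpr (htf _ hb1)
  have hallC : ∀ g : G, g ∈ C := by
    intro g
    rcases key g with hgood | hbad
    · exact (hmemC g).mpr (mul_inv_eq_iff_eq_mul.mp hgood)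
    · exfalso
      have e1 : g * a = a⁻¹ * g := mul_inv_eq_iff_eq_mul.mp hbad
      have e3 : a⁻¹ * g⁻¹ = g⁻¹ * a := by
        have := congrArg Inv.inv e1
        simpa [mul_inv_rev] using this
      have e2' : g * a⁻¹ * g⁻¹ = a := by
        have h' : (g * a * g⁻¹)⁻¹ = a := by rw [hbad, inv_inv]
        calc g * a⁻¹ * g⁻¹ = (g * a * g⁻¹)⁻¹ := by group
          _ = a := h'
      have e2 : g * a⁻¹ = a * g := mul_inv_eq_iff_eq_mul.mp e2'
      have hg1 : g ≠ 1 := by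
        rintro rfl
        have : a = a⁻¹ := by simpa using hbad
        have h2 : a ^ (2 : ℕ) = 1 := by rw [pow_two]; nth_rewrite 2 [this]; simp
        exact haf (isOfFinOrder_iff_pow_eq_one.mpr ⟨2, two_pos, h2⟩)
      have hg2C : g * g ∈ C := by
        apply (hmemC _).mpr
        calc g * g * a = g * (g * a) := by group
          _ = g * (a⁻¹ * g) := by rw [e1]
          _ = (g * a⁻¹) * g := by group
          _ = (a * g) * g := by rw [e2]
          _ = a * (g * g) := by group
      have hconjC : g * (b : G) * g⁻¹ ∈ C := by
        apply (hmemC _).mpr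
        have hbC : (b : G) * a = a * (b : G) := (hmemC (b : G)).mp b.2
        have hbC' : a⁻¹ * (b : G) = (b : G) * a⁻¹ :=
          (Commute.inv_left (Commute.symm hbC)).eq
        calc g * (b : G) * g⁻¹ * a = g * (b : G) * (g⁻¹ * a) := by group
          _ = g * (b : G) * (a⁻¹ * g⁻¹) := by rw [← e3]
          _ = g * ((b : G) * a⁻¹) * g⁻¹ := by group
          _ = g * (a⁻¹ * (b : G)) * g⁻¹ := by rw [hbC']
          _ = (g * a⁻¹) * (b : G) * g⁻¹ := by group
          _ = (a * g) * (b : G) * g⁻¹ := by rw [e2]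
          _ = a * (g * (b : G) * g⁻¹) := by group
      obtain ⟨k, hk⟩ := hbgen ⟨g * (b : G) * g⁻¹, hconjC⟩
      have hkG : (b : G) ^ k = g * (b : G) * g⁻¹ := by
        simpa using congrArg Subtype.val hk
      obtain ⟨j, hj⟩ := hbgen ⟨a, haC⟩
      have hjG : (b : G) ^ j = a := by simpa using congrArg Subtype.val hj
      have hj0 : j ≠ 0 := by
        rintro rfl
        rw [zpow_zero] at hjG
        exact ha1 hjG.symm
      have hkj : (b : G) ^ (k * j) = (b : G) ^ (-j) := by
        calc (b : G) ^ (k * j) = ((b : G) ^ k) ^ j := by rw [zpow_mul]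
          _ = (g * (b : G) * g⁻¹) ^ j := by rw [hkG]
          _ = g * ((b : G) ^ j) * g⁻¹ := conj_zpow
          _ = g * a * g⁻¹ := by rw [hjG]
          _ = a⁻¹ := hbad
          _ = ((b : G) ^ j)⁻¹ := by rw [hjG]
          _ = (b : G) ^ (-j) := (zpow_neg _ _).symm
      have hkeq : k * j = -j := hbinj hkj
      have hkm1 : k = -1 := by
        have : (k + 1) * j = 0 := by ring_nf; omega
        rcases mul_eq_zero.mp this with h | h
        · omega
        · exact absurd h hj0
      obtain ⟨n, hn⟩ := hbgen ⟨g * g, hg2C⟩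
      have hnG : (b : G) ^ n = g * g := by simpa using congrArg Subtype.val hn
      have hcon : (b : G) ^ (-n) = (b : G) ^ n := by
        calc (b : G) ^ (-n) = (b : G) ^ (k * n) := by rw [hkm1]; ring_nf
          _ = ((b : G) ^ k) ^ n := by rw [zpow_mul]
          _ = (g * (b : G) * g⁻¹) ^ n := by rw [hkG]
          _ = g * ((b : G) ^ n) * g⁻¹ := conj_zpow
          _ = g * (g * g) * g⁻¹ := by rw [hnG]
          _ = g * g := by group
          _ = (b : G) ^ n := hnG.symm
      have hn0 : n = 0 := by
        have := hbinj hcon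
        omega
      have hgg : g * g = 1 := by rw [← hnG, hn0, zpow_zero]
      have : IsOfFinOrder g :=
        isOfFinOrder_iff_pow_eq_one.mpr ⟨2, two_pos, by rw [pow_two]; exact hgg⟩
      exact htf g hg1 this
  have hgen' : ∀ g : G, g ∈ Subgroup.zpowers (b : G) := by
    intro g
    obtain ⟨n, hn⟩ := hbgen ⟨g, hallC g⟩
    exact ⟨n, by simpa using congrArg Subtype.val hn⟩
  exact isFreeGroup_of_infinite_cyclic (b : G) (htf _ hb1) hgen'
end
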